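/- Let R be a relational structure on E. The collection of monomorphic parts of R satisfies the goodness axioms: every singleton is a monomorphic part; every subset of a monomorphic part is a monomorphic part; and any family of monomorphic parts with a common point has union a monomorphic part. -/

import Mathlib

/-- A relational structure on a base set (type) `E`: a family of finitary relations on `E`. -/
structure RelStruct (E : Type*) where
  ι : Type*
  arity : ι → ℕ
  rel : ∀ i : ι, (Fin (arity i) → E) → Prop

/-- The substructures induced by `R` on `A` and `B` are isomorphic: there is a bijection
`A ≃ B` transporting every relation of `R` restricted to `A` onto its restriction to `B`. -/
def RelStruct.Iso {E : Type*} (R : RelStruct E) (A B : Set E) : Prop :=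
  ∃ e : A ≃ B, ∀ (i : R.ι) (v : Fin (R.arity i) → A),
    R.rel i (fun j => (v j : E)) ↔ R.rel i (fun j => (e (v j) : E))

/-- `F` is a monomorphic part of `R`: any two finite subsets of the same cardinality which
agree outside `F` induce isomorphic substructures. -/
def IsMonoPart {E : Type*} (R : RelStruct E) (F : Set E) : Prop :=
  ∀ A A' : Set E, A.Finite → A'.Finite → A.ncard = A'.ncard → A \ F = A' \ F →
    R.Iso A A'

/-- A collection `P` of subsets of `E` (a set partition of `E`) is a monomorphic
decomposition of `R` if any two finite subsets meeting every block in the same number of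
elements induce isomorphic substructures. -/
def IsMonoDecomp {E : Type*} (R : RelStruct E) (P : Set (Set E)) : Prop :=
  ∀ A A' : Set E, A.Finite → A'.Finite →
    (∀ p ∈ P, (A ∩ p).ncard = (A' ∩ p).ncard) → R.Iso A A'

/-- Indexed variant: a family `(B x)_{x ∈ X}` of subsets of `E` is a monomorphic
decomposition of `R` if any two finite subsets meeting every block in the same number of
elements induce isomorphic substructures. -/
def IsMonoDecompFam {E : Type*} {X : Type*} (R : RelStruct E) (B : X → Set E) : Prop :=
  ∀ A A' : Set E, A.Finite → A'.Finite →
    (∀ x : X, (A ∩ B x).ncard = (A' ∩ B x).ncard) → R.Iso A A'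

lemma iso_refl {E : Type*} (R : RelStruct E) (A : Set E) : R.Iso A A :=
  ⟨Equiv.refl _, fun _ _ => Iff.rfl⟩

lemma iso_trans {E : Type*} (R : RelStruct E) {A B C : Set E}
    (h1 : R.Iso A B) (h2 : R.Iso B C) : R.Iso A C := by
  obtain ⟨e, he⟩ := h1; obtain ⟨f, hf⟩ := h2
  exact ⟨e.trans f, fun i v => (he i v).trans (hf i (fun j => e (v j)))⟩

lemma iso_of_eq {E : Type*} (R : RelStruct E) {A B : Set E} (h : A = B) : R.Iso A B := by
  subst h; exact iso_refl R A

lemma step {E : Type*} (R : RelStruct E) {𝒮 : Set (Set E)} (h𝒮 : ∀ F ∈ 𝒮, IsMonoPart R F)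
    {x : E} (hx : ∀ F ∈ 𝒮, x ∈ F) {C : Set E} (hC : C.Finite) {a b : E}
    (ha : a ∉ C) (hb : b ∉ C) {Fa Fb : Set E} (hFa : Fa ∈ 𝒮) (haFa : a ∈ Fa)
    (hFb : Fb ∈ 𝒮) (hbFb : b ∈ Fb) : R.Iso (insert a C) (insert b C) := by
  by_cases hab : a = b
  · subst hab; exact iso_refl R _
  by_cases hxC : x ∈ C
  · -- chain insert a C = insert a (insert x D) ≈ insert b (insert a D) ≈ insert b (insert x D)
    set D := C \ {x} with hD
    have hCD : C = insert x D := by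
      rw [hD]; exact (Set.insert_diff_singleton.trans (by simp [hxC])).symm
    have hxD : x ∉ D := by simp [hD]
    have haD : a ∉ D := fun h => ha (h.1)
    have hbD : b ∉ D := fun h => hb (h.1)
    have hax : a ≠ x := fun h => ha (h ▸ hxC)
    have hbx : b ≠ x := fun h => hb (h ▸ hxC)
    have hDfin : D.Finite := hC.diff
    have hfin1 : (insert a (insert x D)).Finite := (hDfin.insert _).insert _
    have hfin2 : (insert b (insert a D)).Finite := (hDfin.insert _).insert _
    have hfin3 : (insert b (insert x D)).Finite := (hDfin.insert _).insert _
    have hcard1 : (insert a (insert x D)).ncard = D.ncard + 2 := by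
      rw [Set.ncard_insert_of_notMem (by simp [haD, hax]) (hDfin.insert _),
        Set.ncard_insert_of_notMem hxD hDfin]
    have hcard2 : (insert b (insert a D)).ncard = D.ncard + 2 := by
      rw [Set.ncard_insert_of_notMem (by simp [hbD, Ne.symm hab]) (hDfin.insert _),
        Set.ncard_insert_of_notMem haD hDfin]
    have hcard3 : (insert b (insert x D)).ncard = D.ncard + 2 := by
      rw [Set.ncard_insert_of_notMem (by simp [hbD, hbx]) (hDfin.insert _),
        Set.ncard_insert_of_notMem hxD hDfin]
    have i1 : R.Iso (insert a (insert x D)) (insert b (insert a D)) := by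
      apply h𝒮 Fb hFb _ _ hfin1 hfin2 (hcard1.trans hcard2.symm)
      rw [Set.insert_comm a x D, Set.insert_diff_of_mem _ (hx Fb hFb),
        Set.insert_diff_of_mem _ hbFb]
    have i2 : R.Iso (insert b (insert a D)) (insert b (insert x D)) := by
      apply h𝒮 Fa hFa _ _ hfin2 hfin3 (hcard2.trans hcard3.symm)
      rw [Set.insert_comm b a D, Set.insert_comm b x D, Set.insert_diff_of_mem _ haFa,
        Set.insert_diff_of_mem _ (hx Fa hFa)]
    rw [hCD]
    exact iso_trans R i1 i2
  · have i1 : R.Iso (insert a C) (insert x C) := by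
      apply h𝒮 Fa hFa _ _ (hC.insert _) (hC.insert _)
      · rw [Set.ncard_insert_of_notMem ha hC, Set.ncard_insert_of_notMem hxC hC]
      · rw [Set.insert_diff_of_mem _ haFa, Set.insert_diff_of_mem _ (hx Fa hFa)]
    have i2 : R.Iso (insert x C) (insert b C) := by
      apply h𝒮 Fb hFb _ _ (hC.insert _) (hC.insert _)
      · rw [Set.ncard_insert_of_notMem hxC hC, Set.ncard_insert_of_notMem hb hC]
      · rw [Set.insert_diff_of_mem _ (hx Fb hFb), Set.insert_diff_of_mem _ hbFb]
    exact iso_trans R i1 i2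

lemma key {E : Type*} (R : RelStruct E) {𝒮 : Set (Set E)} (h𝒮 : ∀ F ∈ 𝒮, IsMonoPart R F)
    {x : E} (hx : ∀ F ∈ 𝒮, x ∈ F) : ∀ n : ℕ, ∀ A A' : Set E, A.Finite → A'.Finite →
    A.ncard = A'.ncard → A \ ⋃₀ 𝒮 = A' \ ⋃₀ 𝒮 → (A \ A').ncard = n → R.Iso A A' := by
  intro n
  induction n with
  | zero =>
    intro A A' hA hA' hcard _ hn
    have hsub : A ⊆ A' := by
      rw [← Set.diff_eq_empty]
      exact (Set.ncard_eq_zero hA.diff).mp hn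
    exact iso_of_eq R (Set.eq_of_subset_of_ncard_le hsub hcard.ge hA')
  | succ n ih =>
    intro A A' hA hA' hcard hout hn
    have hne : (A \ A').Nonempty := by
      rw [Set.nonempty_iff_ne_empty]
      intro h; rw [h, Set.ncard_empty] at hn; omega
    obtain ⟨a, haA, haA'⟩ := hne
    have hne' : (A' \ A).Nonempty := by
      rw [Set.nonempty_iff_ne_empty]
      intro h
      have hsub : A' ⊆ A := Set.diff_eq_empty.mp h
      have : A' = A := Set.eq_of_subset_of_ncard_le hsub hcard.le hA
      subst this
      exact haA' haA
    obtain ⟨b, hbA', hbA⟩ := hne'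
    have haU : a ∈ ⋃₀ 𝒮 := by
      by_contra h
      exact haA' ((hout ▸ (Set.mem_diff a).mpr ⟨haA, h⟩ : a ∈ A' \ ⋃₀ 𝒮)).1
    have hbU : b ∈ ⋃₀ 𝒮 := by
      by_contra h
      exact hbA ((hout.symm ▸ (Set.mem_diff b).mpr ⟨hbA', h⟩ : b ∈ A \ ⋃₀ 𝒮)).1
    obtain ⟨Fa, hFa, haFa⟩ := haU
    obtain ⟨Fb, hFb, hbFb⟩ := hbU
    set C := A \ {a} with hCdef
    have hCfin : C.Finite := hA.diff
    have haC : a ∉ C := by simp [hCdef]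
    have hbC : b ∉ C := fun h => hbA h.1
    have hAC : A = insert a C := by
      rw [hCdef, Set.insert_diff_singleton, Set.insert_eq_of_mem haA]
    have i1 : R.Iso A (insert b C) := hAC ▸ step R h𝒮 hx hCfin haC hbC hFa haFa hFb hbFb
    have hcard2 : (insert b C).ncard = A.ncard := by
      rw [Set.ncard_insert_of_notMem hbC hCfin, hCdef,
        Set.ncard_diff_singleton_of_mem haA]
      have : 0 < A.ncard := (Set.ncard_pos hA).mpr ⟨a, haA⟩
      omega
    have hout2 : insert b C \ ⋃₀ 𝒮 = A' \ ⋃₀ 𝒮 := by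
      rw [Set.insert_diff_of_mem _ (Set.mem_sUnion.mpr ⟨Fb, hFb, hbFb⟩), ← hout, hCdef, Set.diff_diff_comm,
        Set.diff_singleton_eq_self]
      exact fun h => h.2 (Set.mem_sUnion.mpr ⟨Fa, hFa, haFa⟩)
    have hdiff2 : (insert b C \ A').ncard = n := by
      rw [Set.insert_diff_of_mem _ hbA', hCdef, Set.diff_diff_comm,
        Set.ncard_diff_singleton_of_mem (Set.mem_diff_of_mem haA haA'), hn]
      omega
    exact iso_trans R i1 (ih (insert b C) A' (hCfin.insert _) hA'
      (hcard2.trans hcard) hout2 hdiff2)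

/-- The monomorphic parts of a relational structure `R` on `E` satisfy the
goodness axioms: singletons are monomorphic parts; subsets of monomorphic parts are
monomorphic parts; and a (possibly infinite) family of monomorphic parts with a common point
has union a monomorphic part. -/
theorem monoParts_satisfy_goodness {E : Type*} (R : RelStruct E) :
    (∀ x : E, IsMonoPart R {x}) ∧
    (∀ F : Set E, IsMonoPart R F → ∀ F' ⊆ F, IsMonoPart R F') ∧
    (∀ 𝒮 : Set (Set E), (∀ F ∈ 𝒮, IsMonoPart R F) → (⋂₀ 𝒮).Nonempty →
      IsMonoPart R (⋃₀ 𝒮)) := by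
  refine ⟨?_, ?_, ?_⟩
  · intro x A A' hA hA' hcard hdiff
    have : A = A' := by
      by_cases hxA : x ∈ A <;> by_cases hxA' : x ∈ A'
      · have := congrArg (insert x) hdiff
        rwa [Set.insert_diff_singleton, Set.insert_diff_singleton,
          Set.insert_eq_of_mem hxA, Set.insert_eq_of_mem hxA'] at this
      · exfalso
        have h1 : A.ncard = (A \ {x}).ncard + 1 := by
          rw [Set.ncard_diff_singleton_of_mem hxA]
          have : 0 < A.ncard := (Set.ncard_pos hA).mpr ⟨x, hxA⟩
          omega
        have h2 : A' \ {x} = A' := Set.diff_singleton_eq_self hxA'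
        rw [hcard, hdiff, h2] at h1
        omega
      · exfalso
        have h1 : A'.ncard = (A' \ {x}).ncard + 1 := by
          rw [Set.ncard_diff_singleton_of_mem hxA']
          have : 0 < A'.ncard := (Set.ncard_pos hA').mpr ⟨x, hxA'⟩
          omega
        have h2 : A \ {x} = A := Set.diff_singleton_eq_self hxA
        rw [← hcard, ← hdiff, h2] at h1
        omega
      · rwa [Set.diff_singleton_eq_self hxA, Set.diff_singleton_eq_self hxA'] at hdiff
    exact iso_of_eq R this
  · intro F hF F' hF' A A' hA hA' hcard hdiff
    apply hF A A' hA hA' hcard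
    have h1 : A \ F = (A \ F') \ F := by
      rw [Set.diff_diff, Set.union_eq_self_of_subset_left hF']
    have h2 : A' \ F = (A' \ F') \ F := by
      rw [Set.diff_diff, Set.union_eq_self_of_subset_left hF']
    rw [h1, h2, hdiff]
  · intro 𝒮 h𝒮 ⟨x, hx⟩ A A' hA hA' hcard hdiff
    exact key R h𝒮 (fun F hF => hx F hF) ((A \ A').ncard) A A' hA hA' hcard hdiff rfl
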